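/- Fix integers k ≥ 2 and d ≥ 3 and set L := (k−1)(d−1). For every p ∈ [0, 1 − 1/L], one has R(p) ≤ p + 4·p^L and Q(p) ≤ (p + 4·p^L)^{k−1}. -/

import Mathlib

lemma lemA (L : ℕ) (hL : 2 ≤ L) : ((L:ℝ))^L ≤ 4 * ((L:ℝ)-1)^L := by
  rcases Nat.lt_or_ge L 4 with h4 | h4
  · interval_cases L <;> norm_num
  · obtain ⟨n, rfl⟩ : ∃ n, L = n + 1 := ⟨L - 1, by omega⟩
    have hn : 3 ≤ n := by omega
    have hn0 : (0:ℝ) < n := by positivity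
    have hn3 : (3:ℝ) ≤ n := by exact_mod_cast hn
    have h1 : (1 + 1/(n:ℝ)) ≤ Real.exp (1/(n:ℝ)) := by
      have := Real.add_one_le_exp (1/(n:ℝ)); linarith
    have h2 : (1 + 1/(n:ℝ))^n ≤ Real.exp 1 := by
      calc (1 + 1/(n:ℝ))^n ≤ (Real.exp (1/(n:ℝ)))^n := by
            apply pow_le_pow_left₀ (by positivity) h1
        _ = Real.exp ((n:ℝ) * (1/(n:ℝ))) := by rw [← Real.exp_nat_mul]
        _ = Real.exp 1 := by rw [mul_one_div, div_self (ne_of_gt hn0)]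
    have hb : (1 + 1/(n:ℝ)) ≤ 4/3 := by
      have : (1:ℝ)/n ≤ 1/3 :=
        div_le_div_of_nonneg_left (by norm_num) (by norm_num) hn3
      linarith
    have hexp : Real.exp 1 ≤ 3 := by
      have := Real.exp_one_lt_d9; norm_num at this ⊢; linarith
    have h3 : (1 + 1/(n:ℝ))^(n+1) ≤ 4 := by
      have hpos : (0:ℝ) ≤ (1 + 1/(n:ℝ))^n := by positivity
      calc (1 + 1/(n:ℝ))^(n+1) = (1 + 1/(n:ℝ))^n * (1 + 1/(n:ℝ)) := by ring
        _ ≤ Real.exp 1 * (4/3) := by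
            apply mul_le_mul h2 hb (by positivity) (Real.exp_pos 1).le
        _ ≤ 3 * (4/3) := by linarith
        _ = 4 := by norm_num
    have key : ((n:ℝ)+1)^(n+1) = (1 + 1/(n:ℝ))^(n+1) * (n:ℝ)^(n+1) := by
      rw [← mul_pow]; congr 1; field_simp
    calc ((n+1:ℕ):ℝ)^(n+1) = (1 + 1/(n:ℝ))^(n+1) * (n:ℝ)^(n+1) := by push_cast; rw [key]
      _ ≤ 4 * (n:ℝ)^(n+1) := by
          apply mul_le_mul_of_nonneg_right h3 (by positivity)
      _ = 4 * (((n+1:ℕ):ℝ)-1)^(n+1) := by push_cast; ring_nf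

lemma lemB (L : ℕ) (hL : 2 ≤ L) (p : ℝ) (hp0 : 0 ≤ p) (hp1 : p ≤ 1) :
    (L:ℝ) * (1-p) * ((L:ℝ)*p/((L:ℝ)-1))^(L-1) ≤ 1 := by
  have hL2 : (2:ℝ) ≤ L := by exact_mod_cast hL
  have hL0 : (0:ℝ) < L := by linarith
  have hL1 : (0:ℝ) < (L:ℝ) - 1 := by linarith
  set A : ℝ := (L:ℝ) * (1-p) with hA
  set B : ℝ := (L:ℝ)*p/((L:ℝ)-1) with hB
  have hA0 : 0 ≤ A := by apply mul_nonneg hL0.le; linarith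
  have hB0 : 0 ≤ B := by positivity
  have hw : 1/(L:ℝ) + ((L:ℝ)-1)/(L:ℝ) = 1 := by field_simp; ring
  have key := Real.geom_mean_le_arith_mean2_weighted
    (by positivity : (0:ℝ) ≤ 1/(L:ℝ)) (by positivity : (0:ℝ) ≤ ((L:ℝ)-1)/(L:ℝ))
    hA0 hB0 hw
  have hrhs : 1/(L:ℝ) * A + ((L:ℝ)-1)/(L:ℝ) * B = 1 := by
    rw [hA, hB]; field_simp; ring
  rw [hrhs] at key
  have hx0 : 0 ≤ A ^ (1/(L:ℝ)) * B ^ (((L:ℝ)-1)/(L:ℝ)) := by positivity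
  have hpow := pow_le_one₀ hx0 key (n := L)
  have hexp : (A ^ (1/(L:ℝ)) * B ^ (((L:ℝ)-1)/(L:ℝ)))^L = A * B^(L-1) := by
    rw [mul_pow, ← Real.rpow_natCast (A ^ (1/(L:ℝ))) L,
        ← Real.rpow_natCast (B ^ (((L:ℝ)-1)/(L:ℝ))) L,
        ← Real.rpow_mul hA0, ← Real.rpow_mul hB0]
    rw [one_div, inv_mul_cancel₀ (ne_of_gt hL0), Real.rpow_one]
    rw [div_mul_cancel₀ _ (ne_of_gt hL0)]
    have : ((L:ℝ) - 1) = ((L-1 : ℕ) : ℝ) := by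
      have : 1 ≤ L := by omega
      push_cast [Nat.cast_sub this]; ring
    rw [this, Real.rpow_natCast]
  rw [hexp] at hpow
  calc (L:ℝ) * (1-p) * B^(L-1) = A * B^(L-1) := by rw [hA]
    _ ≤ 1 := hpow

/-- With `L = (k-1)(d-1)`, for every `p ∈ [0, 1-1/L]` one has
`R(p) ≤ p + 4 p^L` and `Q(p) = R(p)^(k-1) ≤ (p + 4 p^L)^(k-1)`. -/
theorem stmt_5 (k d : ℕ) (hk : 2 ≤ k) (hd : 3 ≤ d) (L : ℕ) (hL : L = (k-1)*(d-1))
    (R : ℝ → ℝ)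
    (hR : ∀ p : ℝ, 0 ≤ p → p < 1 - 1/(L:ℝ) →
      R p ∈ Set.Ico (0:ℝ) 1 ∧ R p = p + (1-p) * (R p)^L)
    (hR1 : R (1 - 1/(L:ℝ)) = 1) :
    ∀ p ∈ Set.Icc (0:ℝ) (1 - 1/(L:ℝ)),
      R p ≤ p + 4 * p^L ∧ (R p)^(k-1) ≤ (p + 4 * p^L)^(k-1) := by
  have hL2 : 2 ≤ L := by
    have h1 : 1 ≤ k - 1 := by omega
    have h2 : 2 ≤ d - 1 := by omega
    have := Nat.mul_le_mul h1 h2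
    omega
  have hLR : (2:ℝ) ≤ (L:ℝ) := by exact_mod_cast hL2
  have hL0 : (0:ℝ) < L := by linarith
  have hL1 : (0:ℝ) < (L:ℝ) - 1 := by linarith
  intro p hp
  -- first component suffices
  suffices hmain : R p ≤ p + 4 * p^L ∧ 0 ≤ R p by
    refine ⟨hmain.1, pow_le_pow_left₀ hmain.2 hmain.1 (k-1)⟩
  rcases eq_or_lt_of_le hp.2 with he | hlt
  · -- boundary case p = 1 - 1/L
    subst he
    rw [hR1]
    have hpe : 1 - 1/(L:ℝ) = ((L:ℝ)-1)/(L:ℝ) := by field_simp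
    have h4 : 1 ≤ 4 * (1 - 1/(L:ℝ))^L := by
      rw [hpe, div_pow, ← mul_div_assoc, le_div_iff₀ (pow_pos hL0 L)]
      have := lemA L hL2
      linarith
    constructor
    · have hpnn : (0:ℝ) ≤ 1 - 1/(L:ℝ) := hp.1
      linarith
    · norm_num
  · -- interior case
    obtain ⟨⟨hR0, hRlt⟩, heq⟩ := hR p hp.1 hlt
    refine ⟨?_, hR0⟩
    rcases eq_or_lt_of_le hp.1 with hp0 | hp0
    · -- p = 0
      have hz : R 0 = 0 := by
        rw [← hp0] at heq hRlt hR0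
        by_contra hne
        have hpos : 0 < R 0 := lt_of_le_of_ne hR0 (Ne.symm hne)
        have : (R 0)^L < (R 0)^1 :=
          pow_lt_pow_right_of_lt_one₀ hpos hRlt (by omega)
        simp at this
        nlinarith
      rw [← hp0, hz]
      have : (0:ℝ)^L = 0 := zero_pow (by omega)
      rw [this]; norm_num
    · -- 0 < p
      have hp1' : p < 1 := by
        have : (0:ℝ) < 1/(L:ℝ) := by positivity
        linarith
      set m : ℝ := (L:ℝ)*p/((L:ℝ)-1) with hm
      have hm0 : 0 ≤ m := by positivity
      have hm1 : m < 1 := by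
        rw [hm, div_lt_one hL1]
        have : (L:ℝ) * p < (L:ℝ) * (1 - 1/(L:ℝ)) :=
          mul_lt_mul_of_pos_left hlt hL0
        have he2 : (L:ℝ) * (1 - 1/(L:ℝ)) = (L:ℝ) - 1 := by field_simp
        linarith
      have hmid : (L:ℝ) * p = m * ((L:ℝ)-1) := by
        rw [hm]; field_simp
      -- g(m) ≤ 0
      have hB := lemB L hL2 p hp.1 hp1'.le
      rw [← hm] at hB
      have hmL : m^L = m^(L-1) * m := by
        conv_lhs => rw [show L = (L-1)+1 by omega]
        rw [pow_succ]
      have hgm : p + (1-p) * m^L ≤ m := by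
        have h1 : (L:ℝ)*(1-p)*m^(L-1)*m ≤ 1*m :=
          mul_le_mul_of_nonneg_right hB hm0
        rw [one_mul] at h1
        have h1' : (L:ℝ)*((1-p)*m^L) ≤ m := by rw [hmL]; linarith [h1]
        nlinarith [h1', hmid, hL0]
      -- R p ≤ m by strict convexity
      have hRm : R p ≤ m := by
        by_contra hcon
        push_neg at hcon
        set a : ℝ := (1 - R p)/(1 - m) with ha
        set b : ℝ := (R p - m)/(1 - m) with hb
        have hm1' : (0:ℝ) < 1 - m := by linarith
        have ha0 : 0 < a := by apply div_pos <;> linarith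
        have hb0 : 0 < b := by apply div_pos <;> linarith
        have hab : a + b = 1 := by
          rw [ha, hb, ← add_div, div_eq_one_iff_eq (ne_of_gt hm1')]
          ring
        have hcomb : a * m + b * 1 = R p := by
          rw [ha, hb]; field_simp; ring
        have hcomb' : a * m + b = R p := by rw [← hcomb]; ring
        have hsc := (strictConvexOn_pow hL2).2 (Set.mem_Ici.mpr hm0)
          (Set.mem_Ici.mpr zero_le_one) (ne_of_lt hm1) ha0 hb0 hab
        have hlt2 : (R p)^L < a * m^L + b := by
          rw [← hcomb']; simpa using hsc
        have h1p : (0:ℝ) < 1 - p := by linarith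
        nlinarith [mul_lt_mul_of_pos_left hlt2 h1p,
          mul_le_mul_of_nonneg_left hgm ha0.le, heq, hcomb, hab]
      -- conclude
      have hm4 : m^L ≤ 4 * p^L := by
        rw [hm, div_pow, mul_pow, div_le_iff₀ (pow_pos hL1 L)]
        have := mul_le_mul_of_nonneg_right (lemA L hL2) (pow_nonneg hp.1 L)
        linarith [this]
      have hRL : (R p)^L ≤ m^L := pow_le_pow_left₀ hR0 hRm L
      have hRLnn : 0 ≤ (R p)^L := pow_nonneg hR0 L
      linarith [heq, hRL, hm4, mul_nonneg hp0.le hRLnn]
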